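/- Let α ≥ 1 and C ≥ 3α + 1 be reals, let γ ∈ (0, 1/2) satisfy C·γ ≤ 1/2, let d ≥ 1 and n ≥ d be integers, and let w be a probability vector on [n] (w_j ≥ 0, Σ_j w_j = 1). Let B ⊆ [n] be a set of d indices carrying the d largest entries of w, and suppose Σ_{j∈B} w_j + √d·( Σ_{j∉B} w_j² )^{1/2} ≤ α·γ. Let X_1, …, X_n be independent {0,1}-valued random variables with P[X_j = 1] ≤ 1/2 − C·γ for every j. Then P[ Σ_{j=1}^n w_j·X_j > 1/2 − γ ] ≤ exp(−d). -/

import Mathlib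

open Finset

set_option maxHeartbeats 1000000

noncomputable section

/-- Indicator of a proposition. -/
def ind (P : Prop) : ℝ := @ite ℝ P (Classical.propDecidable P) 1 0

lemma ind_pos {P : Prop} (h : P) : ind P = 1 := by simp [ind, h]

lemma ind_neg {P : Prop} (h : ¬P) : ind P = 0 := by simp [ind, h]

/-- `exp u ≤ 1 + u + u²` for `0 ≤ u ≤ 1`. -/
lemma exp_le_one_add_add_sq {u : ℝ} (h0 : 0 ≤ u) (h1 : u ≤ 1) :
    Real.exp u ≤ 1 + u + u ^ 2 := by
  have hx : |u| ≤ 1 := by rwa [abs_of_nonneg h0]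
  have h := Real.exp_bound hx (n := 2) (by norm_num)
  have hs : ∑ m ∈ Finset.range 2, u ^ m / (m.factorial : ℝ) = 1 + u := by
    simp [Finset.sum_range_succ]
  rw [hs, abs_of_nonneg h0] at h
  have h2 : Real.exp u - (1 + u) ≤ u ^ 2 * ((3 : ℝ) / (2 * 2)) := by
    have := abs_le.mp h
    simpa [Nat.factorial] using this.2
  nlinarith [sq_nonneg u]

/-- **Spread-query Hoeffding bound.**
Let `α ≥ 1`, `C ≥ 3α + 1`, `γ ∈ (0, 1/2)` with `Cγ ≤ 1/2`, `d ≥ 1`, `n ≥ d`, and let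
`w` be a probability vector on `[n]`. Let `B` be a set of `d` indices carrying the `d`
largest entries of `w` and assume `Σ_{j∈B} wⱼ + √d·(Σ_{j∉B} wⱼ²)^{1/2} ≤ αγ`. If
`X₁, …, Xₙ` are independent `{0,1}`-valued random variables with `P[Xⱼ = 1] ≤ 1/2 - Cγ`
for every `j` (here `q j = P[Xⱼ = 1]`), then `P[Σⱼ wⱼXⱼ > 1/2 - γ] ≤ exp(-d)`. -/
theorem spread_query_hoeffding
    (α C γ : ℝ) (hα : 1 ≤ α) (hC : 3 * α + 1 ≤ C)
    (hγ0 : 0 < γ) (hγ1 : γ < 1 / 2) (hCγ : C * γ ≤ 1 / 2)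
    (d n : ℕ) (hd : 1 ≤ d) (hdn : d ≤ n)
    (w : Fin n → ℝ) (hw0 : ∀ j, 0 ≤ w j) (hw1 : ∑ j, w j = 1)
    (B : Finset (Fin n)) (hBcard : B.card = d)
    (hBtop : ∀ i ∈ B, ∀ j ∉ B, w j ≤ w i)
    (hspread : ∑ j ∈ B, w j + Real.sqrt d * Real.sqrt (∑ j ∈ Bᶜ, w j ^ 2) ≤ α * γ)
    (q : Fin n → ℝ) (hq0 : ∀ j, 0 ≤ q j) (hq1 : ∀ j, q j ≤ 1 / 2 - C * γ) :
    ∑ x : Fin n → Bool,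
        (∏ j, if x j then q j else 1 - q j) *
          ind (1 / 2 - γ < ∑ j, w j * (if x j then (1 : ℝ) else 0))
      ≤ Real.exp (-(d : ℝ)) := by
  classical
  have hd1 : (1 : ℝ) ≤ (d : ℝ) := by exact_mod_cast hd
  have hαγ : 0 < α * γ := by nlinarith
  have hCγpos : (0:ℝ) ≤ C * γ := by nlinarith
  have hCγ0 : (0 : ℝ) ≤ 1 / 2 - C * γ := by linarith
  set m := ∑ j ∈ B, w j with hm
  have hm0 : 0 ≤ m := Finset.sum_nonneg fun j _ => hw0 j
  set V := ∑ j ∈ Bᶜ, w j ^ 2 with hVdef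
  have hV0 : 0 ≤ V := Finset.sum_nonneg fun j _ => sq_nonneg _
  have hmle : m ≤ α * γ := by
    have : 0 ≤ Real.sqrt d * Real.sqrt V := by positivity
    linarith [hspread]
  have hdV : (d : ℝ) * V ≤ (α * γ) ^ 2 := by
    have h1 : Real.sqrt ((d : ℝ) * V) ≤ α * γ := by
      rw [Real.sqrt_mul (by positivity) V]
      linarith [hspread]
    have h2 := Real.sq_sqrt (show (0:ℝ) ≤ (d : ℝ) * V by positivity)
    nlinarith [Real.sqrt_nonneg ((d : ℝ) * V)]
  set lam := (d : ℝ) / (α * γ) with hlam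
  have hlam0 : 0 ≤ lam := by positivity
  have hlamαγ : lam * (α * γ) = d := div_mul_cancel₀ _ (ne_of_gt hαγ)
  -- small tail entries
  have hwsmall : ∀ j ∉ B, (d : ℝ) * w j ≤ m := by
    intro j hj
    calc (d : ℝ) * w j = ∑ _i ∈ B, w j := by
          rw [Finset.sum_const, hBcard, nsmul_eq_mul]
      _ ≤ ∑ i ∈ B, w i := Finset.sum_le_sum fun i hi => hBtop i hi j hj
  set u : Fin n → ℝ := fun j => if j ∈ B then 0 else lam * w j with hu
  have hu0 : ∀ j, 0 ≤ u j := by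
    intro j
    by_cases hj : j ∈ B
    · simp [hu, hj]
    · simp only [hu, hj, if_false]
      exact mul_nonneg hlam0 (hw0 j)
  have hu1 : ∀ j, u j ≤ 1 := by
    intro j
    by_cases hj : j ∈ B
    · simp [hu, hj]
    · simp only [hu, hj, if_false]
      rw [hlam, div_mul_eq_mul_div, div_le_one hαγ]
      calc (d : ℝ) * w j ≤ m := hwsmall j hj
        _ ≤ α * γ := hmle
  have hq1' : ∀ j, q j ≤ 1 := fun j => le_trans (hq1 j) (by linarith)
  have hp0 : ∀ (j : Fin n) (b : Bool), 0 ≤ (if b then q j else 1 - q j) := by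
    intro j b
    cases b
    · simp only [Bool.false_eq_true, if_false]
      linarith [hq1 j]
    · simpa using hq0 j
  set g : Fin n → Bool → ℝ :=
    fun j b => (if b then q j else 1 - q j) * Real.exp (u j * (if b then 1 else 0)) with hg
  have hg0 : ∀ j b, 0 ≤ g j b := fun j b =>
    mul_nonneg (hp0 j b) (Real.exp_pos _).le
  set c := 1 / 2 - γ - m with hc
  -- Step A: pointwise bound
  have stepA : ∀ x : Fin n → Bool,
      (∏ j, if x j then q j else 1 - q j) *
          ind (1 / 2 - γ < ∑ j, w j * (if x j then (1 : ℝ) else 0))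
        ≤ Real.exp (-(lam * c)) * ∏ j, g j (x j) := by
    intro x
    have hprodp : 0 ≤ ∏ j, (if x j then q j else 1 - q j) :=
      Finset.prod_nonneg fun j _ => hp0 j (x j)
    by_cases hP : 1 / 2 - γ < ∑ j, w j * (if x j then (1 : ℝ) else 0)
    · have hInd : ind (1 / 2 - γ < ∑ j, w j * (if x j then (1 : ℝ) else 0)) = 1 :=
        ind_pos hP
      rw [hInd, mul_one]
      have hgprod : ∏ j, g j (x j)
          = (∏ j, (if x j then q j else 1 - q j)) *
            Real.exp (∑ j, u j * (if x j then (1:ℝ) else 0)) := by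
        rw [Real.exp_sum, ← Finset.prod_mul_distrib]
      -- exponent lower bound
      have hE : lam * c ≤ ∑ j, u j * (if x j then (1:ℝ) else 0) := by
        have hsplit : ∑ j, u j * (if x j then (1:ℝ) else 0)
            = lam * ∑ j ∈ Bᶜ, w j * (if x j then (1:ℝ) else 0) := by
          rw [Finset.mul_sum, ← Finset.sum_add_sum_compl B
            (fun j => u j * (if x j then (1:ℝ) else 0))]
          have h1 : ∑ j ∈ B, u j * (if x j then (1:ℝ) else 0) = 0 := by
            apply Finset.sum_eq_zero
            intro j hj
            simp [hu, hj]
          rw [h1, zero_add]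
          apply Finset.sum_congr rfl
          intro j hj
          rw [Finset.mem_compl] at hj
          simp [hu, hj, mul_assoc]
        rw [hsplit]
        have hT : c ≤ ∑ j ∈ Bᶜ, w j * (if x j then (1:ℝ) else 0) := by
          have hSB : ∑ j ∈ B, w j * (if x j then (1:ℝ) else 0) ≤ m := by
            apply Finset.sum_le_sum
            intro j hj
            by_cases hx : x j <;> simp [hx, hw0 j]
          have hsum : ∑ j ∈ B, w j * (if x j then (1:ℝ) else 0)
              + ∑ j ∈ Bᶜ, w j * (if x j then (1:ℝ) else 0)
              = ∑ j, w j * (if x j then (1:ℝ) else 0) :=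
            Finset.sum_add_sum_compl B _
          rw [hc]; linarith
        exact mul_le_mul_of_nonneg_left hT hlam0
      have h1 : (1:ℝ) ≤ Real.exp (-(lam * c) + ∑ j, u j * (if x j then (1:ℝ) else 0)) :=
        Real.one_le_exp (by linarith)
      calc (∏ j, if x j then q j else 1 - q j)
          = (∏ j, if x j then q j else 1 - q j) * 1 := (mul_one _).symm
        _ ≤ (∏ j, if x j then q j else 1 - q j) *
              Real.exp (-(lam * c) + ∑ j, u j * (if x j then (1:ℝ) else 0)) :=
            mul_le_mul_of_nonneg_left h1 hprodp
        _ = Real.exp (-(lam * c)) * ∏ j, g j (x j) := by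
            rw [hgprod, Real.exp_add]; ring
    · have hInd : ind (1 / 2 - γ < ∑ j, w j * (if x j then (1 : ℝ) else 0)) = 0 := by
        exact ind_neg hP
      rw [hInd, mul_zero]
      exact mul_nonneg (Real.exp_pos _).le
        (Finset.prod_nonneg fun j _ => hg0 j (x j))
  -- Step B: factorize and bound each factor
  have hswap : ∑ x : Fin n → Bool, ∏ j, g j (x j) = ∏ j, ∑ b : Bool, g j b := by
    rw [Finset.prod_univ_sum (fun _ => (Finset.univ : Finset Bool)) g,
      Fintype.piFinset_univ]
  have hfactor : ∀ j, ∑ b : Bool, g j b ≤ Real.exp (q j * u j + (u j) ^ 2) := by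
    intro j
    have hsb : ∑ b : Bool, g j b = (1 - q j) + q j * Real.exp (u j) := by
      simp [hg, Fintype.sum_bool, add_comm]
    rw [hsb]
    have hexp := exp_le_one_add_add_sq (hu0 j) (hu1 j)
    have h1 : (1 - q j) + q j * Real.exp (u j)
        ≤ 1 + (q j * u j + (u j) ^ 2) := by
      have := mul_le_mul_of_nonneg_left hexp (hq0 j)
      nlinarith [hq0 j, hq1' j, sq_nonneg (u j)]
    calc (1 - q j) + q j * Real.exp (u j) ≤ 1 + (q j * u j + (u j) ^ 2) := h1
      _ ≤ Real.exp (q j * u j + (u j) ^ 2) := by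
          linarith [Real.add_one_le_exp (q j * u j + (u j) ^ 2)]
  have hprodfac : ∏ j, ∑ b : Bool, g j b
      ≤ Real.exp (∑ j, (q j * u j + (u j) ^ 2)) := by
    rw [Real.exp_sum]
    apply Finset.prod_le_prod
    · intro j _
      exact Finset.sum_nonneg fun b _ => hg0 j b
    · intro j _
      exact hfactor j
  -- exponent arithmetic
  have hexpsum : ∑ j, (q j * u j + (u j) ^ 2)
      ≤ lam * (1 / 2 - C * γ) + lam ^ 2 * V := by
    rw [← Finset.sum_add_sum_compl B (fun j => q j * u j + (u j) ^ 2)]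
    have h1 : ∑ j ∈ B, (q j * u j + (u j) ^ 2) = 0 := by
      apply Finset.sum_eq_zero
      intro j hj
      simp [hu, hj]
    rw [h1, zero_add]
    have h2 : ∑ j ∈ Bᶜ, (q j * u j + (u j) ^ 2)
        = ∑ j ∈ Bᶜ, (q j * (lam * w j)) + lam ^ 2 * V := by
      rw [hVdef, Finset.mul_sum, ← Finset.sum_add_distrib]
      apply Finset.sum_congr rfl
      intro j hj
      rw [Finset.mem_compl] at hj
      simp only [hu, hj, if_false]
      ring
    rw [h2]
    have h3 : ∑ j ∈ Bᶜ, q j * (lam * w j) ≤ lam * (1 / 2 - C * γ) := by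
      have h4 : ∑ j ∈ Bᶜ, q j * (lam * w j) ≤ ∑ j ∈ Bᶜ, (1/2 - C*γ) * (lam * w j) := by
        apply Finset.sum_le_sum
        intro j _
        exact mul_le_mul_of_nonneg_right (hq1 j) (mul_nonneg hlam0 (hw0 j))
      have h5 : ∑ j ∈ Bᶜ, (1/2 - C*γ) * (lam * w j)
          = (1/2 - C*γ) * lam * ∑ j ∈ Bᶜ, w j := by
        rw [Finset.mul_sum]; apply Finset.sum_congr rfl; intros; ring
      have h6 : ∑ j ∈ Bᶜ, w j ≤ 1 := by
        have := Finset.sum_add_sum_compl B w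
        rw [hw1] at this
        linarith [hm0]
      rw [h5] at h4
      calc ∑ j ∈ Bᶜ, q j * (lam * w j) ≤ (1/2 - C*γ) * lam * ∑ j ∈ Bᶜ, w j := h4
        _ ≤ (1/2 - C*γ) * lam * 1 :=
            mul_le_mul_of_nonneg_left h6 (mul_nonneg hCγ0 hlam0)
        _ = lam * (1 / 2 - C * γ) := by ring
    linarith
  have hfinal : -(lam * c) + (lam * (1 / 2 - C * γ) + lam ^ 2 * V) ≤ -(d : ℝ) := by
    have hlamsqV : lam ^ 2 * V ≤ (d : ℝ) := by
      have key : lam ^ 2 * V * (α * γ) ^ 2 ≤ (d : ℝ) * (α * γ) ^ 2 := by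
        have : lam ^ 2 * V * (α * γ) ^ 2 = (d : ℝ) * ((d : ℝ) * V) := by
          rw [← hlamαγ]; ring
        rw [this]
        have hd0 : (0:ℝ) ≤ (d : ℝ) := by positivity
        nlinarith [hdV]
      have hpos : (0:ℝ) < (α * γ) ^ 2 := by positivity
      exact le_of_mul_le_mul_right key hpos
    have hlin : lam * (m + γ - C * γ) ≤ -(2 * (d : ℝ)) := by
      have h7 : m + γ - C * γ ≤ -(2 * (α * γ)) := by nlinarith
      calc lam * (m + γ - C * γ) ≤ lam * (-(2 * (α * γ))) :=
            mul_le_mul_of_nonneg_left h7 hlam0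
        _ = -(2 * (lam * (α * γ))) := by ring
        _ = -(2 * (d : ℝ)) := by rw [hlamαγ]
    have : -(lam * c) + lam * (1 / 2 - C * γ) = lam * (m + γ - C * γ) := by
      rw [hc]; ring
    linarith
  calc ∑ x : Fin n → Bool,
        (∏ j, if x j then q j else 1 - q j) *
          ind (1 / 2 - γ < ∑ j, w j * (if x j then (1 : ℝ) else 0))
      ≤ ∑ x : Fin n → Bool, Real.exp (-(lam * c)) * ∏ j, g j (x j) :=
        Finset.sum_le_sum fun x _ => stepA x
    _ = Real.exp (-(lam * c)) * ∑ x : Fin n → Bool, ∏ j, g j (x j) := by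
        rw [Finset.mul_sum]
    _ = Real.exp (-(lam * c)) * ∏ j, ∑ b : Bool, g j b := by rw [hswap]
    _ ≤ Real.exp (-(lam * c)) * Real.exp (∑ j, (q j * u j + (u j) ^ 2)) := by
        apply mul_le_mul_of_nonneg_left hprodfac (Real.exp_pos _).le
    _ = Real.exp (-(lam * c) + ∑ j, (q j * u j + (u j) ^ 2)) := by
        rw [Real.exp_add]
    _ ≤ Real.exp (-(d : ℝ)) := by
        exact Real.exp_le_exp.mpr (le_trans (add_le_add_right hexpsum _) hfinal)

end
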